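/- Let π and ϱ be matchings on a finite set C, and let C = C₁ ∪ C₂ be a well coloring (every 2-cycle of π and of ϱ has one endpoint in each part). Define μ on C by μ(c) = π(c) if c ∈ C₁ and μ(c) = ϱ(c) if c ∈ C₂. Then μ is a permutation of C and μ⁻¹·π·μ = ϱ. -/
import Mathlib


/-- Given matchings `π`, `ϱ` and a well coloring `C₁`, the map equal to `π` on `C₁`
and to `ϱ` outside `C₁` is a permutation `μ` (the knot) and `μ⁻¹ * π * μ = ϱ`. -/
theorem knot_exists {C : Type*} [Fintype C] [DecidableEq C]
    (π ϱ : Equiv.Perm C)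
    (hπinv : π * π = 1) (hπfpf : ∀ c : C, π c ≠ c)
    (hϱinv : ϱ * ϱ = 1) (hϱfpf : ∀ c : C, ϱ c ≠ c)
    (C₁ : Set C)
    (hπcol : ∀ c : C, c ∈ C₁ ↔ π c ∉ C₁)
    (hϱcol : ∀ c : C, c ∈ C₁ ↔ ϱ c ∉ C₁) :
    ∃ μ : Equiv.Perm C,
      (∀ c ∈ C₁, μ c = π c) ∧ (∀ c ∉ C₁, μ c = ϱ c) ∧ μ⁻¹ * π * μ = ϱ := by
  classical
  have hπ2 : ∀ c, π (π c) = c := fun c => by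
    have := congrArg (fun g => (g : Equiv.Perm C) c) hπinv; simpa using this
  have hϱ2 : ∀ c, ϱ (ϱ c) = c := fun c => by
    have := congrArg (fun g => (g : Equiv.Perm C) c) hϱinv; simpa using this
  set f : C → C := fun c => if c ∈ C₁ then π c else ϱ c with hf
  have hinj : Function.Injective f := by
    intro a b hab
    by_cases ha : a ∈ C₁ <;> by_cases hb : b ∈ C₁ <;> simp only [hf, ha, hb, if_pos, if_neg,
      if_true, if_false] at hab
    · exact π.injective hab
    · exfalso
      have h1 : π a ∉ C₁ := (hπcol a).mp ha
      have h2 : ϱ b ∈ C₁ := by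
        by_contra h; exact hb ((hϱcol b).mpr h)
      rw [hab] at h1; exact h1 h2
    · exfalso
      have h1 : π b ∉ C₁ := (hπcol b).mp hb
      have h2 : ϱ a ∈ C₁ := by
        by_contra h; exact ha ((hϱcol a).mpr h)
      rw [← hab] at h1; exact h1 h2
    · exact ϱ.injective hab
  let μ : Equiv.Perm C := Equiv.ofBijective f (Finite.injective_iff_bijective.mp hinj)
  have hμ : ∀ c, μ c = f c := fun c => rfl
  refine ⟨μ, fun c hc => by simp [hμ, hf, hc], fun c hc => by simp [hμ, hf, hc], ?_⟩
  ext c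
  simp only [Equiv.Perm.mul_apply, Equiv.Perm.coe_mul, Function.comp_apply]
  rw [Equiv.Perm.inv_eq_iff_eq]
  by_cases hc : c ∈ C₁
  · have h1 : ϱ c ∉ C₁ := (hϱcol c).mp hc
    rw [hμ, hμ]
    simp only [hf, hc, if_pos, if_neg h1, hϱ2, hπ2]
  · have h1 : ϱ c ∈ C₁ := by
      by_contra h
      exact hc ((hϱcol c).mpr h)
    rw [hμ, hμ]
    simp [hf, hc, h1]
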